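/- Let a > 0 and θ < 0. Then for every n ≥ 0 one has the duality p_n^a(θ) = p_n^a(1/θ). -/
import Mathlib


open MeasureTheory Set

/-- Persistence probability `p_n^a(θ)` for the MA(1) process with uniform
innovations on `[-a,1]`. -/
noncomputable def persprob (a θ : ℝ) : ℕ → ℝ
  | 0 => 1
  | n + 1 =>
    (volume {x : Fin (n + 2) → ℝ |
        (∀ i, x i ∈ Icc (-a) 1) ∧
        ∀ i : Fin (n + 1), θ * x i.castSucc ≤ x i.succ}).toReal / (1 + a) ^ (n + 2)

private lemma flip_ineq {θ u v : ℝ} (hθ : θ < 0) :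
    θ * u ≤ v ↔ (1 / θ) * v ≤ u := by
  rw [one_div, ← div_eq_inv_mul, div_le_iff_of_neg hθ, mul_comm]

theorem duality_negative_theta (a θ : ℝ) (ha : 0 < a) (hθ : θ < 0) :
    ∀ n : ℕ, persprob a θ n = persprob a (1 / θ) n := by
  intro n
  match n with
  | 0 => rfl
  | n + 1 =>
    simp only [persprob]
    congr 2
    have hmp := MeasureTheory.volume_measurePreserving_piCongrLeft
      (fun _ : Fin (n + 2) => ℝ) (Fin.revPerm : Fin (n + 2) ≃ Fin (n + 2))
    rw [← hmp.measure_preimage_equiv]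
    congr 1
    ext x
    have key : ∀ i : Fin (n + 2),
        (MeasurableEquiv.piCongrLeft (fun _ : Fin (n+2) => ℝ) Fin.revPerm) x i = x i.rev := by
      intro i
      have h := MeasurableEquiv.piCongrLeft_apply_apply
        (Fin.revPerm : Fin (n+2) ≃ Fin (n+2)) (β := fun _ => ℝ) x i.rev
      simpa [Fin.rev_rev] using h
    simp only [mem_preimage, mem_setOf_eq, key]
    constructor
    · rintro ⟨hbox, hord⟩
      refine ⟨fun i => by simpa [Fin.rev_rev] using hbox i.rev, fun i => ?_⟩
      have h := hord i.rev
      simp only [Fin.rev_castSucc, Fin.rev_succ, Fin.rev_rev] at h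
      exact (flip_ineq hθ).mp h
    · rintro ⟨hbox, hord⟩
      refine ⟨fun i => hbox i.rev, fun i => ?_⟩
      have h := hord i.rev
      rw [Fin.rev_castSucc, Fin.rev_succ]
      exact (flip_ineq hθ).mpr h
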